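/- Two si-logics L and L' contain the same Jankov formulas (that is, for every finite rooted poset X, 𝒥(X) ∈ L if and only if 𝒥(X) ∈ L') if and only if Fin(L) = Fin(L'). -/

import Mathlib

/-- Intuitionistic propositional formulas over variables `p₀, p₁, …`. -/
inductive IForm : Type
  | var : ℕ → IForm
  | bot : IForm
  | and : IForm → IForm → IForm
  | or : IForm → IForm → IForm
  | imp : IForm → IForm → IForm

namespace IForm

/-- Uniform substitution. -/
def subst (σ : ℕ → IForm) : IForm → IForm
  | var n => σ n
  | bot => bot
  | and φ ψ => and (subst σ φ) (subst σ ψ)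
  | or φ ψ => or (subst σ φ) (subst σ ψ)
  | imp φ ψ => imp (subst σ φ) (subst σ ψ)

/-- Biconditional `φ ↔ ψ`. -/
def biimp (φ ψ : IForm) : IForm := and (imp φ ψ) (imp ψ φ)

end IForm

/-- The theorems of the intuitionistic propositional calculus `IPC`, given by a
standard Hilbert-style axiomatization (all axioms are schemes, so `IPC` is
closed under uniform substitution) together with modus ponens. -/
inductive IPC : IForm → Prop
  | ax1 (φ ψ : IForm) : IPC (φ.imp (ψ.imp φ))
  | ax2 (φ ψ χ : IForm) : IPC ((φ.imp (ψ.imp χ)).imp ((φ.imp ψ).imp (φ.imp χ)))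
  | andE1 (φ ψ : IForm) : IPC ((φ.and ψ).imp φ)
  | andE2 (φ ψ : IForm) : IPC ((φ.and ψ).imp ψ)
  | andI (φ ψ : IForm) : IPC (φ.imp (ψ.imp (φ.and ψ)))
  | orI1 (φ ψ : IForm) : IPC (φ.imp (φ.or ψ))
  | orI2 (φ ψ : IForm) : IPC (ψ.imp (φ.or ψ))
  | orE (φ ψ χ : IForm) : IPC ((φ.imp χ).imp ((ψ.imp χ).imp ((φ.or ψ).imp χ)))
  | exfalso (φ : IForm) : IPC (IForm.bot.imp φ)
  | mp (φ ψ : IForm) : IPC (φ.imp ψ) → IPC φ → IPC ψ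

/-- A superintuitionistic logic: a set of formulas containing `IPC` and closed
under modus ponens and uniform substitution. -/
def SuperIntuitionistic (L : Set IForm) : Prop :=
  (∀ φ, IPC φ → φ ∈ L) ∧
  (∀ φ ψ, φ.imp ψ ∈ L → φ ∈ L → ψ ∈ L) ∧
  (∀ φ (σ : ℕ → IForm), φ ∈ L → φ.subst σ ∈ L)
/-- Kripke forcing on a poset, relative to a valuation by upsets. -/
def Forces {X : Type} [Preorder X] (v : ℕ → Set X) : X → IForm → Prop
  | x, .var n => x ∈ v n
  | _, .bot => False
  | x, .and φ ψ => Forces v x φ ∧ Forces v x ψ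
  | x, .or φ ψ => Forces v x φ ∨ Forces v x ψ
  | x, .imp φ ψ => ∀ y, x ≤ y → Forces v y φ → Forces v y ψ

/-- A formula is valid in a poset if it is forced at every point under every
valuation by upsets. -/
def ValidIn (X : Type) [Preorder X] (φ : IForm) : Prop :=
  ∀ v : ℕ → Set X, (∀ n, IsUpperSet (v n)) → ∀ x : X, Forces v x φ

/-- A poset validates a logic if every formula of the logic is valid in it. -/
def ValidLogic (X : Type) [Preorder X] (L : Set IForm) : Prop :=
  ∀ φ ∈ L, ValidIn X φ

/-- `Fin(L) = Fin(L')`: the two logics are validated by the same finite posets. -/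
def SameFinPosets (L L' : Set IForm) : Prop :=
  ∀ (X : Type) [Fintype X] [PartialOrder X], ValidLogic X L ↔ ValidLogic X L'

/-- The fmp span of a logic: the si-logics validated by the same finite posets. -/
def fmpSpan (L : Set IForm) : Set (Set IForm) :=
  {L' | SuperIntuitionistic L' ∧ SameFinPosets L L'}

/-- The degree of the finite model property of a logic. -/
def degFmp (L : Set IForm) : Cardinal :=
  Cardinal.mk (fmpSpan L)
/-- The upsets of a preorder. -/
abbrev Ups (X : Type) [Preorder X] : Type := {U : Set X // IsUpperSet U}

/-- Intersection of upsets. -/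
def upsInter {X : Type} [Preorder X] (U V : Ups X) : Ups X := ⟨U.1 ∩ V.1, U.2.inter V.2⟩

/-- Union of upsets. -/
def upsUnion {X : Type} [Preorder X] (U V : Ups X) : Ups X := ⟨U.1 ∪ V.1, U.2.union V.2⟩

/-- Heyting implication of upsets: `U → V = {x : ↑x ∩ U ⊆ V}`. -/
def upsHimp {X : Type} [Preorder X] (U V : Ups X) : Ups X :=
  ⟨{x | ∀ y, x ≤ y → y ∈ U.1 → y ∈ V.1}, by
    intro a b hab ha y hby hyU
    exact ha y (le_trans hab hby) hyU⟩

/-- The empty upset. -/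
def upsEmpty {X : Type} [Preorder X] : Ups X := ⟨∅, isUpperSet_empty⟩

/-- Finite conjunction. -/
def bigConj : List IForm → IForm
  | [] => IForm.bot.imp IForm.bot
  | φ :: l => φ.and (bigConj l)

/-- The Jankov formula of a finite rooted poset `X` with root `r`: choosing a
distinct variable `p_U` for each upset `U` of `X`, it is `δ → p_s`, where `δ`
is the conjunction of `p_{U∩V} ↔ p_U ∧ p_V`, `p_{U∪V} ↔ p_U ∨ p_V`,
`p_{U→V} ↔ (p_U → p_V)` over all upsets `U, V`, together with `p_∅ ↔ ⊥`, and
`s = X ∖ {r}` is the second largest element of `Up(X)`. -/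
noncomputable def jankov (X : Type) [Fintype X] [PartialOrder X] (r : X)
    (hr : ∀ x, r ≤ x) : IForm :=
  letI : Fintype (Ups X) := Fintype.ofFinite _
  let e : Ups X ≃ Fin (Fintype.card (Ups X)) := Fintype.equivFin (Ups X)
  let p : Ups X → IForm := fun U => IForm.var (e U).val
  let all : List (Ups X) := (List.finRange (Fintype.card (Ups X))).map e.symm
  let triple : Ups X → Ups X → IForm := fun U V =>
    ((p (upsInter U V)).biimp ((p U).and (p V))).and
      (((p (upsUnion U V)).biimp ((p U).or (p V))).and
        ((p (upsHimp U V)).biimp ((p U).imp (p V))))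
  let δ : IForm :=
    (bigConj (all.map fun U => bigConj (all.map fun V => triple U V))).and
      ((p upsEmpty).biimp IForm.bot)
  let s : Ups X := ⟨Set.univ \ {r}, by
    intro a b hab ha
    simp only [Set.mem_diff, Set.mem_univ, Set.mem_singleton_iff, true_and] at ha ⊢
    intro hb
    exact ha (le_antisymm (hb ▸ hab) (hr a))⟩
  δ.imp (p s)

/-- A formula is a Jankov formula if it is the Jankov formula of some finite
rooted poset. -/
def IsJankovFormula (φ : IForm) : Prop :=
  ∃ (X : Type) (i1 : Fintype X) (i2 : PartialOrder X) (r : X)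
    (hr : ∀ x : X, i2.le r x), φ = @jankov X i1 i2 r hr

/-! ### Auxiliary development -/

section Derivations

/-- Derivations from a list of hypotheses. -/
inductive Deriv : List IForm → IForm → Prop
  | ax {Γ φ} : IPC φ → Deriv Γ φ
  | hyp {Γ φ} : φ ∈ Γ → Deriv Γ φ
  | mp {Γ φ ψ} : Deriv Γ (φ.imp ψ) → Deriv Γ φ → Deriv Γ ψ

theorem Deriv.weak {Γ Γ' : List IForm} {φ} (h : Deriv Γ φ) (hsub : ∀ x ∈ Γ, x ∈ Γ') :
    Deriv Γ' φ := by
  induction h with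
  | ax h => exact .ax h
  | hyp h => exact .hyp (hsub _ h)
  | mp _ _ ih1 ih2 => exact .mp ih1 ih2

theorem ipc_id (φ : IForm) : IPC (φ.imp φ) :=
  .mp _ _ (.mp _ _ (.ax2 φ (φ.imp φ) φ) (.ax1 φ (φ.imp φ))) (.ax1 φ φ)

/-- The deduction theorem. -/
theorem Deriv.ded {Γ : List IForm} {γ φ} (h : Deriv (γ :: Γ) φ) : Deriv Γ (γ.imp φ) := by
  induction h with
  | ax h => exact .mp (.ax (.ax1 _ _)) (.ax h)
  | hyp h =>
    rcases List.mem_cons.1 h with h | h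
    · subst h; exact .ax (ipc_id _)
    · exact .mp (.ax (.ax1 _ _)) (.hyp h)
  | mp _ _ ih1 ih2 => exact .mp (.mp (.ax (.ax2 _ _ _)) ih1) ih2

theorem Deriv.toIPC {φ} (h : Deriv [] φ) : IPC φ := by
  induction h with
  | ax h => exact h
  | hyp h => simp at h
  | mp _ _ ih1 ih2 => exact .mp _ _ ih1 ih2

namespace Deriv

variable {Γ : List IForm} {A B C D φ ψ χ : IForm}

theorem andE1' (h : Deriv Γ (φ.and ψ)) : Deriv Γ φ := .mp (.ax (.andE1 _ _)) h
theorem andE2' (h : Deriv Γ (φ.and ψ)) : Deriv Γ ψ := .mp (.ax (.andE2 _ _)) h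
theorem andI' (h1 : Deriv Γ φ) (h2 : Deriv Γ ψ) : Deriv Γ (φ.and ψ) :=
  .mp (.mp (.ax (.andI _ _)) h1) h2

theorem wk (h : Deriv Γ φ) : Deriv (ψ :: Γ) φ := h.weak (fun _ hx => List.mem_cons_of_mem _ hx)

theorem comp (h1 : Deriv Γ (φ.imp ψ)) (h2 : Deriv Γ (ψ.imp χ)) : Deriv Γ (φ.imp χ) :=
  .ded (.mp h2.wk (.mp h1.wk (.hyp (List.mem_cons_self))))

theorem fwd (h : Deriv Γ (A.biimp B)) : Deriv Γ (A.imp B) := h.andE1'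
theorem bwd (h : Deriv Γ (A.biimp B)) : Deriv Γ (B.imp A) := h.andE2'
theorem biimpI (h1 : Deriv Γ (A.imp B)) (h2 : Deriv Γ (B.imp A)) : Deriv Γ (A.biimp B) :=
  andI' h1 h2
theorem biimp_refl : Deriv Γ (A.biimp A) := biimpI (.ax (ipc_id _)) (.ax (ipc_id _))
theorem biimp_symm (h : Deriv Γ (A.biimp B)) : Deriv Γ (B.biimp A) := biimpI h.bwd h.fwd
theorem biimp_trans (h1 : Deriv Γ (A.biimp B)) (h2 : Deriv Γ (B.biimp C)) :
    Deriv Γ (A.biimp C) := biimpI (comp h1.fwd h2.fwd) (comp h2.bwd h1.bwd)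

theorem and_mono (h1 : Deriv Γ (A.imp B)) (h2 : Deriv Γ (C.imp D)) :
    Deriv Γ ((A.and C).imp (B.and D)) :=
  .ded (andI' (.mp h1.wk (andE1' (.hyp (List.mem_cons_self))))
    (.mp h2.wk (andE2' (.hyp (List.mem_cons_self)))))

theorem or_mono (h1 : Deriv Γ (A.imp B)) (h2 : Deriv Γ (C.imp D)) :
    Deriv Γ ((A.or C).imp (B.or D)) :=
  .mp (.mp (.ax (.orE _ _ _)) (comp h1 (.ax (.orI1 _ _)))) (comp h2 (.ax (.orI2 _ _)))

theorem imp_mono (h1 : Deriv Γ (B.imp A)) (h2 : Deriv Γ (C.imp D)) :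
    Deriv Γ ((A.imp C).imp (B.imp D)) :=
  .ded (comp (comp h1.wk (.hyp (List.mem_cons_self))) h2.wk)

theorem and_congr (h1 : Deriv Γ (A.biimp B)) (h2 : Deriv Γ (C.biimp D)) :
    Deriv Γ ((A.and C).biimp (B.and D)) :=
  biimpI (and_mono h1.fwd h2.fwd) (and_mono h1.bwd h2.bwd)

theorem or_congr (h1 : Deriv Γ (A.biimp B)) (h2 : Deriv Γ (C.biimp D)) :
    Deriv Γ ((A.or C).biimp (B.or D)) :=
  biimpI (or_mono h1.fwd h2.fwd) (or_mono h1.bwd h2.bwd)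

theorem imp_congr (h1 : Deriv Γ (A.biimp B)) (h2 : Deriv Γ (C.biimp D)) :
    Deriv Γ ((A.imp C).biimp (B.imp D)) :=
  biimpI (imp_mono h1.bwd h2.fwd) (imp_mono h1.fwd h2.bwd)

end Deriv

theorem deriv_bigConj {Γ : List IForm} {l : List IForm} {ψ} (hm : ψ ∈ l)
    (h : Deriv Γ (bigConj l)) : Deriv Γ ψ := by
  induction l with
  | nil => simp at hm
  | cons a l ih =>
    rcases List.mem_cons.1 hm with rfl | hm
    · exact h.andE1'
    · exact ih hm h.andE2'

theorem ipc_swap {A B C : IForm} (h : IPC (A.imp (B.imp C))) : IPC (B.imp (A.imp C)) :=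
  (Deriv.ded (Deriv.ded (.mp (.mp (.ax h) (.hyp (by simp))) (.hyp (by simp))))).toIPC

end Derivations
section JankovAux

variable (X : Type) [Fintype X] [PartialOrder X]

noncomputable def jFin : Fintype (Ups X) := Fintype.ofFinite _

noncomputable def jE : Ups X ≃ Fin (@Fintype.card (Ups X) (jFin X)) :=
  @Fintype.equivFin _ (jFin X)

noncomputable def jP (U : Ups X) : IForm := IForm.var ((jE X U).val)

noncomputable def jAll : List (Ups X) :=
  (List.finRange (@Fintype.card (Ups X) (jFin X))).map (jE X).symm

noncomputable def jTriple (U V : Ups X) : IForm :=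
  (((jP X (upsInter U V)).biimp ((jP X U).and (jP X V)))).and
    ((((jP X (upsUnion U V)).biimp ((jP X U).or (jP X V)))).and
      ((jP X (upsHimp U V)).biimp ((jP X U).imp (jP X V))))

noncomputable def jδ : IForm :=
  (bigConj ((jAll X).map fun U => bigConj ((jAll X).map fun V => jTriple X U V))).and
    ((jP X upsEmpty).biimp IForm.bot)

def jS (r : X) (hr : ∀ x, r ≤ x) : Ups X :=
  ⟨Set.univ \ {r}, by
    intro a b hab ha
    simp only [Set.mem_diff, Set.mem_univ, Set.mem_singleton_iff, true_and] at ha ⊢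
    intro hb
    exact ha (le_antisymm (hb ▸ hab) (hr a))⟩

theorem jankov_eq (r : X) (hr : ∀ x, r ≤ x) :
    jankov X r hr = (jδ X).imp (jP X (jS X r hr)) := rfl

theorem mem_jAll (U : Ups X) : U ∈ jAll X := by
  have : U = (jE X).symm (jE X U) := ((jE X).symm_apply_apply U).symm
  rw [jAll]
  exact this ▸ List.mem_map_of_mem (f := (jE X).symm) (List.mem_finRange _)

end JankovAux
section EvalAux

variable (X : Type) [Fintype X] [PartialOrder X]

/-- Heyting-algebra evaluation of a formula in `Up(X)`. -/
def evalU (hv : ℕ → Ups X) : IForm → Ups X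
  | .var n => hv n
  | .bot => upsEmpty
  | .and φ ψ => upsInter (evalU hv φ) (evalU hv ψ)
  | .or φ ψ => upsUnion (evalU hv φ) (evalU hv ψ)
  | .imp φ ψ => upsHimp (evalU hv φ) (evalU hv ψ)

noncomputable def jσ (hv : ℕ → Ups X) : ℕ → IForm := fun n => jP X (hv n)

set_option linter.unusedSectionVars false in
theorem forces_evalU (hv : ℕ → Ups X) (φ : IForm) :
    ∀ x : X, Forces (fun n => (hv n).1) x φ ↔ x ∈ (evalU X hv φ).1 := by
  induction φ with
  | var n => intro x; rfl
  | bot => intro x; simp [Forces, evalU, upsEmpty]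
  | and φ ψ ih1 ih2 => intro x; simp [Forces, evalU, upsInter, ih1, ih2]
  | or φ ψ ih1 ih2 => intro x; simp [Forces, evalU, upsUnion, ih1, ih2]
  | imp φ ψ ih1 ih2 =>
    intro x
    simp only [Forces, evalU, upsHimp, Set.mem_setOf_eq, ih1, ih2]

theorem deriv_jδ : Deriv [jδ X] (jδ X) := .hyp (List.mem_cons_self)

theorem deriv_triple (U V : Ups X) : Deriv [jδ X] (jTriple X U V) := by
  have h1 : Deriv [jδ X]
      (bigConj ((jAll X).map fun U => bigConj ((jAll X).map fun V => jTriple X U V))) :=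
    (deriv_jδ X).andE1'
  have h2 := deriv_bigConj (List.mem_map_of_mem
    (f := fun U => bigConj ((jAll X).map fun V => jTriple X U V)) (mem_jAll X U)) h1
  exact deriv_bigConj (List.mem_map_of_mem (f := fun V => jTriple X U V) (mem_jAll X V)) h2

theorem deriv_main (hv : ℕ → Ups X) (φ : IForm) :
    Deriv [jδ X] ((φ.subst (jσ X hv)).biimp (jP X (evalU X hv φ))) := by
  induction φ with
  | var n => exact Deriv.biimp_refl
  | bot => exact Deriv.biimp_symm (deriv_jδ X).andE2'
  | and φ ψ ih1 ih2 =>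
    exact Deriv.biimp_trans (Deriv.and_congr ih1 ih2)
      (Deriv.biimp_symm (deriv_triple X _ _).andE1')
  | or φ ψ ih1 ih2 =>
    exact Deriv.biimp_trans (Deriv.or_congr ih1 ih2)
      (Deriv.biimp_symm (deriv_triple X _ _).andE2'.andE1')
  | imp φ ψ ih1 ih2 =>
    exact Deriv.biimp_trans (Deriv.imp_congr ih1 ih2)
      (Deriv.biimp_symm (deriv_triple X _ _).andE2'.andE2')

/-- The generic valuation on `X` by upsets. -/
noncomputable def hvGen : ℕ → Ups X := fun n =>
  if h : n < @Fintype.card (Ups X) (jFin X) then (jE X).symm ⟨n, h⟩ else upsEmpty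

theorem hvGen_apply (U : Ups X) : hvGen X ((jE X U).val) = U := by
  rw [hvGen, dif_pos ((jE X U).isLt)]
  simp

theorem forces_jP (U : Ups X) (x : X) :
    Forces (fun n => (hvGen X n).1) x (jP X U) ↔ x ∈ U.1 := by
  show x ∈ (hvGen X ((jE X U).val)).1 ↔ x ∈ U.1
  rw [hvGen_apply]

theorem forces_bigConj {Y : Type} [Preorder Y] (v : ℕ → Set Y) (x : Y) (l : List IForm) :
    Forces v x (bigConj l) ↔ ∀ ψ ∈ l, Forces v x ψ := by
  induction l with
  | nil => simp [bigConj, Forces]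
  | cons a l ih => simp [bigConj, Forces, ih]

theorem forces_triple (U V : Ups X) (x : X) :
    Forces (fun n => (hvGen X n).1) x (jTriple X U V) := by
  refine ⟨⟨?_, ?_⟩, ⟨?_, ?_⟩, ?_, ?_⟩ <;> intro y _ h
  · rw [forces_jP] at h
    exact ⟨(forces_jP X U y).2 h.1, (forces_jP X V y).2 h.2⟩
  · rw [forces_jP]
    exact ⟨(forces_jP X U y).1 h.1, (forces_jP X V y).1 h.2⟩
  · rw [forces_jP] at h
    rcases h with h | h
    · exact Or.inl ((forces_jP X U y).2 h)
    · exact Or.inr ((forces_jP X V y).2 h)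
  · rw [forces_jP]
    rcases h with h | h
    · exact Or.inl ((forces_jP X U y).1 h)
    · exact Or.inr ((forces_jP X V y).1 h)
  · rw [forces_jP] at h
    intro z hz hzU
    exact (forces_jP X V z).2 (h z hz ((forces_jP X U z).1 hzU))
  · rw [forces_jP]
    intro z hz hzU
    exact (forces_jP X V z).1 (h z hz ((forces_jP X U z).2 hzU))

theorem forces_jδ (x : X) : Forces (fun n => (hvGen X n).1) x (jδ X) := by
  constructor
  · rw [forces_bigConj]
    intro ψ hψ
    rcases List.mem_map.1 hψ with ⟨U, _, rfl⟩
    rw [forces_bigConj]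
    intro χ hχ
    rcases List.mem_map.1 hχ with ⟨V, _, rfl⟩
    exact forces_triple X U V x
  · constructor
    · intro y _ h
      rw [forces_jP] at h
      exact h.elim
    · intro y _ h
      exact h.elim

theorem not_valid_jankov (r : X) (hr : ∀ x, r ≤ x) : ¬ ValidIn X (jankov X r hr) := by
  intro h
  have := h (fun n => (hvGen X n).1) (fun n => (hvGen X n).2) r
  rw [jankov_eq] at this
  have hrs : r ∈ (jS X r hr).1 := this r le_rfl (forces_jδ X r) |> (forces_jP X _ r).1
  exact hrs.2 rfl

end EvalAux
section Criterion

theorem jankov_mem_iff {L : Set IForm} (hL : SuperIntuitionistic L)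
    (X : Type) [Fintype X] [PartialOrder X] (r : X) (hr : ∀ x, r ≤ x) :
    jankov X r hr ∈ L ↔ ¬ ValidLogic X L := by
  constructor
  · intro h hv
    exact not_valid_jankov X r hr (hv _ h)
  · intro h
    rw [ValidLogic] at h
    push_neg at h
    obtain ⟨φ, hφL, hφ⟩ := h
    rw [ValidIn] at hφ
    push_neg at hφ
    obtain ⟨v, hup, x, hx⟩ := hφ
    set hv : ℕ → Ups X := fun n => ⟨v n, hup n⟩ with hhv
    -- the point x does not lie in the value of φ
    have hxU : x ∉ (evalU X hv φ).1 := by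
      intro hmem
      exact hx ((forces_evalU X hv φ x).2 hmem)
    have hrU : r ∉ (evalU X hv φ).1 := fun hmem => hxU ((evalU X hv φ).2 (hr x) hmem)
    -- hence the value of φ is below s
    have hUnion : upsUnion (evalU X hv φ) (jS X r hr) = jS X r hr := by
      apply Subtype.ext
      apply Set.eq_of_subset_of_subset
      · rintro u (hu | hu)
        · exact ⟨trivial, fun he => hrU (he ▸ hu)⟩
        · exact hu
      · exact fun u hu => Or.inr hu
    -- syntactic derivation
    have D := deriv_main X hv φ
    have T : Deriv [jδ X]
        ((jP X (upsUnion (evalU X hv φ) (jS X r hr))).biimp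
          ((jP X (evalU X hv φ)).or (jP X (jS X r hr)))) :=
      (deriv_triple X _ _).andE2'.andE1'
    rw [hUnion] at T
    have step1 : Deriv [jδ X] ((jP X (evalU X hv φ)).imp (jP X (jS X r hr))) :=
      Deriv.comp (.ax (.orI1 _ _)) T.bwd
    have step2 : Deriv [jδ X] ((φ.subst (jσ X hv)).imp (jP X (jS X r hr))) :=
      Deriv.comp D.fwd step1
    have hipc : IPC ((φ.subst (jσ X hv)).imp ((jδ X).imp (jP X (jS X r hr)))) :=
      ipc_swap step2.ded.toIPC
    have hsub : φ.subst (jσ X hv) ∈ L := hL.2.2 φ _ hφL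
    have := hL.2.1 _ _ (hL.1 _ hipc) hsub
    rw [jankov_eq]
    exact this

end Criterion
section Subframe

variable {X : Type} [PartialOrder X]

theorem forces_restrict (x0 : X) (w : ℕ → Set X) (φ : IForm) :
    ∀ y : {y : X // x0 ≤ y}, Forces (fun n => {z : {y : X // x0 ≤ y} | z.1 ∈ w n}) y φ ↔
      Forces w y.1 φ := by
  induction φ with
  | var n => intro y; rfl
  | bot => intro y; rfl
  | and φ ψ ih1 ih2 => intro y; exact and_congr (ih1 y) (ih2 y)
  | or φ ψ ih1 ih2 => intro y; exact or_congr (ih1 y) (ih2 y)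
  | imp φ ψ ih1 ih2 =>
    intro y
    constructor
    · intro h z hz hzφ
      have hz' : x0 ≤ z := le_trans y.2 hz
      have := h ⟨z, hz'⟩ hz ((ih1 ⟨z, hz'⟩).2 hzφ)
      exact (ih2 ⟨z, hz'⟩).1 this
    · intro h z hz hzφ
      exact (ih2 z).2 (h z.1 hz ((ih1 z).1 hzφ))

theorem validIn_subtype (x0 : X) (φ : IForm) (h : ValidIn X φ) :
    ValidIn {y : X // x0 ≤ y} φ := by
  intro u hu y
  set u' : ℕ → Set X := fun n => Subtype.val '' u n with hu'
  have hu'up : ∀ n, IsUpperSet (u' n) := by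
    intro n a b hab ha
    rcases ha with ⟨z, hz, rfl⟩
    exact ⟨⟨b, le_trans z.2 hab⟩, hu n (show z ≤ ⟨b, _⟩ from hab) hz, rfl⟩
  have hrestr : u = fun n => {z : {y : X // x0 ≤ y} | z.1 ∈ u' n} := by
    funext n
    ext z
    simp only [Set.mem_setOf_eq, hu', Set.mem_image]
    exact ⟨fun hz => ⟨z, hz, rfl⟩, fun ⟨z', hz', he⟩ => Subtype.ext he ▸ hz'⟩
  rw [hrestr]
  exact (forces_restrict x0 u' φ y).2 (h u' hu'up y.1)

theorem not_validIn_subtype (x0 : X) (φ : IForm) (w : ℕ → Set X)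
    (hw : ∀ n, IsUpperSet (w n)) (hx : ¬ Forces w x0 φ) :
    ¬ ValidIn {y : X // x0 ≤ y} φ := by
  intro h
  apply hx
  have hup : ∀ n, IsUpperSet {z : {y : X // x0 ≤ y} | z.1 ∈ w n} := by
    intro n a b hab ha
    exact hw n hab ha
  have := h _ hup ⟨x0, le_rfl⟩
  exact (forces_restrict x0 w φ ⟨x0, le_rfl⟩).1 this

end Subframe
section MainAux

theorem validLogic_transfer {L L' : Set IForm} (hL' : SuperIntuitionistic L')
    (hJ : ∀ (X : Type) (i1 : Fintype X) (i2 : PartialOrder X) (r : X)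
      (hr : ∀ x : X, i2.le r x), @jankov X i1 i2 r hr ∈ L' → @jankov X i1 i2 r hr ∈ L)
    (X : Type) [Fintype X] [PartialOrder X] (hv : ValidLogic X L) : ValidLogic X L' := by
  intro φ hφ
  by_contra hc
  rw [ValidIn] at hc
  push_neg at hc
  obtain ⟨w, hw, x0, hx⟩ := hc
  letI : Fintype {y : X // x0 ≤ y} := Fintype.ofFinite _
  set r : {y : X // x0 ≤ y} := ⟨x0, le_rfl⟩ with hrdef
  have hr : ∀ y : {y : X // x0 ≤ y}, r ≤ y := fun y => Subtype.mk_le_mk.mpr y.2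
  have hYL' : ¬ ValidLogic {y : X // x0 ≤ y} L' := fun h =>
    not_validIn_subtype x0 φ w hw hx (h φ hφ)
  have hJY : jankov {y : X // x0 ≤ y} r hr ∈ L' :=
    (jankov_mem_iff hL' _ r hr).2 hYL'
  have hJL : jankov {y : X // x0 ≤ y} r hr ∈ L := hJ _ _ _ r hr hJY
  have hYL : ValidLogic {y : X // x0 ≤ y} L := fun ψ hψ => validIn_subtype x0 ψ (hv ψ hψ)
  exact not_valid_jankov _ r hr (hYL _ hJL)

end MainAux
/-- **Theorem.** Two si-logics `L` and `L'` contain the same Jankov formulas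
iff `Fin(L) = Fin(L')`. -/
theorem same_jankov_iff_sameFinPosets (L L' : Set IForm)
    (hL : SuperIntuitionistic L) (hL' : SuperIntuitionistic L') :
    (∀ (X : Type) (i1 : Fintype X) (i2 : PartialOrder X) (r : X)
        (hr : ∀ x : X, i2.le r x),
          (@jankov X i1 i2 r hr ∈ L ↔ @jankov X i1 i2 r hr ∈ L')) ↔
      SameFinPosets L L' := by
  constructor
  · intro hJ X i1 i2
    constructor
    · exact validLogic_transfer hL' (fun X i1 i2 r hr => (hJ X i1 i2 r hr).2) X
    · exact validLogic_transfer hL (fun X i1 i2 r hr => (hJ X i1 i2 r hr).1) X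
  · intro hS X i1 i2 r hr
    rw [jankov_mem_iff hL X r hr, jankov_mem_iff hL' X r hr]
    exact not_congr (hS X)
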